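/- Let W_1,...,W_N (N ≥ 2) be iid nonnegative continuous random variables with W_* = max_i W_i, and suppose each pair is assigned uniformly at random (via quantile thresholds) to one of M ≥ N mini-slots, with S the event that the minimum slot is uniquely attained. Then E[W_* · 1_S] ≥ α · E[W_*] where α = (1 - (N/M)^N)/(1 + 1/(N-1))^{N-1} ∈ (0,1). -/

import Mathlib

open MeasureTheory

open scoped ENNReal


section Aux
variable {α : Type*} [MeasurableSpace α] (μ : Measure α) [IsProbabilityMeasure μ]

lemma pi_integral_prod {ι : Type*} [Fintype ι] (f : ι → α → ℝ) :
    ∫ x : ι → α, ∏ i, f i (x i) ∂(Measure.pi fun _ => μ) = ∏ i, ∫ x, f i x ∂μ := by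
  letI : MeasureSpace α := ⟨μ⟩
  exact MeasureTheory.integral_fintype_prod_eq_prod f

lemma pi_integrable_prod {ι : Type*} [Fintype ι] (f : ι → α → ℝ)
    (hf : ∀ i, Integrable (f i) μ) :
    Integrable (fun x : ι → α => ∏ i, f i (x i)) (Measure.pi fun _ => μ) := by
  letI : MeasureSpace α := ⟨μ⟩
  exact MeasureTheory.Integrable.fintype_prod hf

lemma cheb (f : α → ℝ) (hm : Measurable f) (hf : Integrable f μ) :
    ∫ x in {x | f x < t}, f x ∂μ ≤ (μ {x | f x < t}).toReal * ∫ x, f x ∂μ := by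
  set s : Set α := {x | f x < t} with hs
  have hsm : MeasurableSet s := measurableSet_lt hm measurable_const
  set p : ℝ := (μ s).toReal with hp
  have hp0 : 0 ≤ p := ENNReal.toReal_nonneg
  have hp1 : p ≤ 1 := by
    rw [hp]
    exact ENNReal.toReal_le_of_le_ofReal one_pos.le (by simpa using prob_le_one (μ := μ) (s := s))
  have hI : ∫ x in s, f x ∂μ + ∫ x in sᶜ, f x ∂μ = ∫ x, f x ∂μ := integral_add_compl hsm hf
  have h1 : ∫ x in s, f x ∂μ ≤ t * p := by
    have : ∫ x in s, f x ∂μ ≤ ∫ _x in s, t ∂μ := by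
      refine setIntegral_mono_on hf.integrableOn (integrableOn_const (measure_ne_top μ s)) hsm ?_
      exact fun x hx => le_of_lt hx
    refine le_trans this (le_of_eq ?_)
    rw [setIntegral_const, smul_eq_mul, mul_comm]
    rfl
  have h2 : t * (1 - p) ≤ ∫ x in sᶜ, f x ∂μ := by
    have hμc : (μ sᶜ).toReal = 1 - p := by
      rw [measure_compl hsm (measure_ne_top μ s), measure_univ,
        ENNReal.toReal_sub_of_le prob_le_one (by simp)]
      simp [hp]
    have : ∫ _x in sᶜ, t ∂μ ≤ ∫ x in sᶜ, f x ∂μ := by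
      refine setIntegral_mono_on (integrableOn_const (measure_ne_top μ _)) hf.integrableOn hsm.compl ?_
      exact fun x hx => not_lt.mp hx
    calc t * (1 - p) = (μ sᶜ).toReal • t := by rw [hμc, smul_eq_mul]; ring
    _ = ∫ _x in sᶜ, t ∂μ := (setIntegral_const t).symm
    _ ≤ _ := this
  rw [← hI]
  nlinarith [h1, h2]

end Aux

lemma bernoulli_pow (x : ℝ) (hx : 0 ≤ x) (n : ℕ) :
    x ^ (n+1) + (n+1) * x ^ n ≤ (x+1) ^ (n+1) := by
  induction n with
  | zero => norm_num
  | succ n ih =>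
    have h1 : (x+1)^(n+1+1) = (x+1) * (x+1)^(n+1) := by ring
    have hxn : 0 ≤ x ^ n := pow_nonneg hx n
    have h2 : (x+1) * (x^(n+1) + (n+1) * x^n) ≤ (x+1) * (x+1)^(n+1) :=
      mul_le_mul_of_nonneg_left ih (by linarith)
    have h3 : x ^ (n+1+1) = x * x^(n+1) := by ring
    have h4 : x ^ (n+1) = x * x^n := by ring
    push_cast
    nlinarith [h2]

lemma sum_pow_le (N : ℕ) (hN : 2 ≤ N) (Mr : ℝ) (hMr : 0 < Mr) :
    ∑ m ∈ Finset.Ico 1 N, ((m : ℝ) / Mr) ^ N ≤ ((N : ℝ) / Mr) ^ N := by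
  have key : ∑ m ∈ Finset.Ico 1 N, (m : ℝ) ^ N ≤ (N : ℝ) ^ N := by
    have h1 : ((N:ℝ)+1) * ∑ m ∈ Finset.Ico 1 N, (m : ℝ) ^ N ≤ (N:ℝ)^(N+1) - 1 := by
      rw [Finset.mul_sum, Finset.sum_Ico_eq_sum_range]
      have := Finset.sum_range_sub (fun i => ((1+i : ℕ) : ℝ) ^ (N+1)) (N - 1)
      calc ∑ i ∈ Finset.range (N-1), ((N:ℝ)+1) * ((1+i : ℕ):ℝ)^N
          ≤ ∑ i ∈ Finset.range (N-1), (((1+(i+1) : ℕ):ℝ)^(N+1) - ((1+i : ℕ):ℝ)^(N+1)) := by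
            refine Finset.sum_le_sum fun i _ => ?_
            have hx : (0:ℝ) ≤ ((1+i:ℕ):ℝ) := by positivity
            have := bernoulli_pow ((1+i:ℕ):ℝ) hx N
            have hcast : ((1+(i+1):ℕ):ℝ) = ((1+i:ℕ):ℝ) + 1 := by push_cast; ring
            rw [hcast]
            linarith
        _ = ((1+(N-1):ℕ):ℝ)^(N+1) - ((1+0:ℕ):ℝ)^(N+1) := this
        _ = (N:ℝ)^(N+1) - 1 := by
            have : (1+(N-1):ℕ) = N := by omega
            rw [this]; norm_num
    have h2 : (N:ℝ)^(N+1) ≤ ((N:ℝ)+1) * (N:ℝ)^N := by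
      rw [pow_succ]; nlinarith [pow_nonneg (by positivity : (0:ℝ) ≤ (N:ℝ)) N]
    have hN1 : (0:ℝ) < (N:ℝ)+1 := by positivity
    rw [← mul_le_mul_iff_right₀ hN1]
    linarith
  have : ∑ m ∈ Finset.Ico 1 N, ((m : ℝ) / Mr) ^ N = (∑ m ∈ Finset.Ico 1 N, (m:ℝ)^N) / Mr ^ N := by
    rw [Finset.sum_div]; exact Finset.sum_congr rfl fun m _ => div_pow _ _ _
  rw [this, div_pow]
  gcongr

lemma ratio_aux (n k : ℕ) (hn : 1 ≤ n) (hk : n ≤ k) (Mr : ℝ) (hM : 0 < Mr) :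
    (((k:ℝ)+1)/Mr)^n ≤ (1 + 1/(n:ℝ))^n * ((k:ℝ)/Mr)^n := by
  have hn0 : (0:ℝ) < n := by exact_mod_cast hn
  have hkn : (n:ℝ) ≤ k := by exact_mod_cast hk
  have hb : ((k:ℝ)+1)/Mr ≤ (1 + 1/(n:ℝ)) * ((k:ℝ)/Mr) := by
    rw [div_le_iff₀ hM] at *
    have h1 : (1:ℝ) ≤ (k:ℝ)/n := (one_le_div hn0).mpr hkn
    have : (1 + 1/(n:ℝ)) * ((k:ℝ)/Mr) * Mr = (k:ℝ) + (k:ℝ)/n := by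
      field_simp
    rw [this]
    linarith
  calc (((k:ℝ)+1)/Mr)^n ≤ ((1 + 1/(n:ℝ)) * ((k:ℝ)/Mr))^n := by
        refine pow_le_pow_left₀ (by positivity) hb n
    _ = (1 + 1/(n:ℝ))^n * ((k:ℝ)/Mr)^n := mul_pow _ _ _


lemma exists_min_fail (P : ℕ → Prop) (h0 : P 0) : ∀ M : ℕ, ¬ P M →
    ∃ m, 1 ≤ m ∧ m ≤ M ∧ P (m-1) ∧ ¬ P m := by
  intro M
  induction M with
  | zero => intro h; exact absurd h0 h
  | succ n ih =>
    intro h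
    by_cases hn : P n
    · exact ⟨n+1, by omega, le_rfl, by simpa using hn, h⟩
    · obtain ⟨m, h1, h2, h3, h4⟩ := ih hn
      exact ⟨m, h1, by omega, h3, h4⟩

/-- Theorem 5 of the paper (performance of CADS with uniform mapping): for `N ≥ 2`
iid nonnegative continuous weights (product space model, common law `ν`), `M ≥ N`
mini-slots assigned via quantile thresholds (each slot interval of probability `1/M`),
and `S` the event that the minimum chosen slot is uniquely attained, the expected
scheduled weight satisfies `E[W_* 1_S] ≥ α E[W_*]` with
`α = (1 - (N/M)^N)/(1 + 1/(N-1))^{N-1}`. -/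
theorem cads_uniform_mapping_performance (N M : ℕ) (hN : 2 ≤ N) (hM : N ≤ M)
    (ν : Measure ℝ) [IsProbabilityMeasure ν]
    (hnonneg : ν {x : ℝ | x < 0} = 0)
    (hcont : ∀ x : ℝ, ν {x} = 0)
    (a : ℕ → ℝ)
    (ha : ∀ m ∈ Finset.Icc 1 M, a m < a (m - 1))
    (hquant : ∀ m ∈ Finset.Icc 1 M, ν (Set.Ico (a m) (a (m - 1))) = 1 / M)
    (slot : ℝ → ℕ) (hmeas : Measurable slot)
    (hslot : ∀ m ∈ Finset.Icc 1 M, ∀ x : ℝ,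
      slot x = m ↔ x ∈ Set.Ico (a m) (a (m - 1)))
    (hint : Integrable (id : ℝ → ℝ) ν) :
    (1 - ((N : ℝ) / M) ^ N) / (1 + 1 / ((N : ℝ) - 1)) ^ (N - 1)
        * ∫ ω, (⨆ i : Fin N, ω i) ∂(Measure.pi fun _ : Fin N => ν)
      ≤ ∫ ω in {ω : Fin N → ℝ | ∃ i : Fin N, ∀ j : Fin N, j ≠ i → slot (ω i) < slot (ω j)},
          (⨆ i : Fin N, ω i) ∂(Measure.pi fun _ : Fin N => ν) := by
  have hM0 : 0 < M := by omega
  have hMr : (0:ℝ) < M := by exact_mod_cast hM0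
  have hMe : (M:ℝ≥0∞) ≠ 0 := by exact_mod_cast hM0.ne'
  have hMt : (M:ℝ≥0∞) ≠ ⊤ := ENNReal.natCast_ne_top M
  -- monotonicity of thresholds
  have hqm : ∀ m, 1 ≤ m → m ≤ M → ν (Set.Ico (a m) (a (m-1))) = 1/(M:ℝ≥0∞) :=
    fun m h1 h2 => hquant m (Finset.mem_Icc.mpr ⟨h1, h2⟩)
  have haI : ∀ m, 1 ≤ m → m ≤ M → a m < a (m-1) :=
    fun m h1 h2 => ha m (Finset.mem_Icc.mpr ⟨h1, h2⟩)
  have hmono : ∀ l, l ≤ M → ∀ k, k ≤ l → a l ≤ a k := by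
    intro l
    induction l with
    | zero => intro _ k hk; rw [Nat.le_zero.mp hk]
    | succ n ih =>
      intro hl k hk
      rcases Nat.eq_or_lt_of_le hk with h | h
      · rw [h]
      · have h1 : a (n+1) < a n := by
          have := haI (n+1) (by omega) hl
          simpa using this
        exact le_trans h1.le (ih (by omega) k (by omega))
  have hstrict : ∀ k l, k < l → l ≤ M → a l < a k := by
    intro k l hkl hlM
    have h1 : a l ≤ a (k+1) := hmono l hlM (k+1) hkl
    have h2 : a (k+1) < a k := by
      have := haI (k+1) (by omega) (by omega)
      simpa using this
    exact lt_of_le_of_lt h1 h2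
  -- measures of unions of consecutive intervals
  have hup2 : ∀ k, k ≤ M → ν (Set.Ico (a M) (a (M - k))) = (k : ℝ≥0∞)/M := by
    intro k
    induction k with
    | zero => intro _; simp
    | succ n ih =>
      intro hn
      have hInt : ν (Set.Ico (a (M - n)) (a (M - (n+1)))) = 1/(M:ℝ≥0∞) := by
        have := hqm (M - n) (by omega) (by omega)
        have h2 : M - n - 1 = M - (n+1) := by omega
        rwa [h2] at this
      have hsplit : Set.Ico (a M) (a (M - (n+1))) =
          Set.Ico (a M) (a (M - n)) ∪ Set.Ico (a (M - n)) (a (M - (n+1))) := by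
        rw [Set.Ico_union_Ico_eq_Ico (hmono M le_rfl (M-n) (by omega))
          (hmono (M-n) (by omega) (M-(n+1)) (by omega))]
      rw [hsplit, measure_union (Set.Ico_disjoint_Ico_same) measurableSet_Ico,
        ih (by omega), hInt, ENNReal.div_add_div_same]
      push_cast
      ring_nf
  have hIoc1 : ν (Set.Ico (a M) (a 0)) = 1 := by
    have := hup2 M le_rfl
    rw [Nat.sub_self] at this
    rw [this, ENNReal.div_self hMe hMt]
  have hIioM : ν (Set.Iio (a M)) = 0 := by
    have hdis : Disjoint (Set.Iio (a M)) (Set.Ico (a M) (a 0)) :=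
      (Set.Iio_disjoint_Ici le_rfl).mono_right Set.Ico_subset_Ici_self
    have h1 : ν (Set.Iio (a M)) + 1 ≤ 1 := by
      conv_lhs => rw [← hIoc1, ← measure_union hdis measurableSet_Ico]
      exact prob_le_one
    have := ENNReal.le_of_add_le_add_right (by simp : (1:ℝ≥0∞) ≠ ⊤)
      (by simpa using h1 : ν (Set.Iio (a M)) + 1 ≤ 0 + 1)
    exact le_antisymm this (zero_le)
  have hIio : ∀ k, k ≤ M → ν (Set.Iio (a k)) = ((M - k : ℕ) : ℝ≥0∞)/M := by
    intro k hk
    have hsplit : Set.Iio (a k) = Set.Iio (a M) ∪ Set.Ico (a M) (a k) :=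
      (Set.Iio_union_Ico_eq_Iio (hmono M le_rfl k hk)).symm
    have hdis : Disjoint (Set.Iio (a M)) (Set.Ico (a M) (a k)) :=
      (Set.Iio_disjoint_Ici le_rfl).mono_right Set.Ico_subset_Ici_self
    rw [hsplit, measure_union hdis measurableSet_Ico, hIioM, zero_add]
    have h1 : M - (M - k) = k := by omega
    have := hup2 (M - k) (by omega)
    rwa [h1] at this
  have hout : ν ((Set.Ico (a M) (a 0))ᶜ) = 0 := by
    rw [measure_compl measurableSet_Ico (measure_ne_top _ _), measure_univ, hIoc1, tsub_self]
  have hapos : ∀ k, k + 1 ≤ M → 0 < a k := by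
    intro k hk
    by_contra h
    push_neg at h
    have hsub : Set.Ico (a (k+1)) (a k) ⊆ {x : ℝ | x < 0} := by
      intro x hx
      exact lt_of_lt_of_le hx.2 h
    have h1 : ν (Set.Ico (a (k+1)) (a k)) = 0 :=
      le_antisymm (hnonneg ▸ measure_mono hsub) (zero_le)
    have h2 := hqm (k+1) (by omega) hk
    simp only [Nat.add_sub_cancel] at h2
    rw [h1] at h2
    have : (1:ℝ≥0∞)/M ≠ 0 := by
      simp [ENNReal.div_eq_zero_iff, hMt]
    exact this h2.symm
  have hdecomp : ∀ m, m ≤ M → ∀ x, a M ≤ x → x < a m →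
      ∃ k, m < k ∧ k ≤ M ∧ a k ≤ x ∧ x < a (k-1) := by
    intro m hm
    have : ∀ d m, m ≤ M → M - m ≤ d → ∀ x, a M ≤ x → x < a m →
        ∃ k, m < k ∧ k ≤ M ∧ a k ≤ x ∧ x < a (k-1) := by
      intro d
      induction d with
      | zero =>
        intro m hm hd x hx1 hx2
        have : m = M := by omega
        subst this
        exact absurd (lt_of_le_of_lt hx1 hx2) (lt_irrefl _)
      | succ d ih =>
        intro m hm hd x hx1 hx2
        have hmM : m < M := by
          by_contra h
          have : m = M := by omega
          subst this
          exact absurd (lt_of_le_of_lt hx1 hx2) (lt_irrefl _)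
        by_cases hcase : a (m+1) ≤ x
        · exact ⟨m+1, by omega, by omega, hcase, by simpa using hx2⟩
        · push_neg at hcase
          obtain ⟨k, hk1, hk2, hk3, hk4⟩ := ih (m+1) (by omega) (by omega) x hx1 hcase
          exact ⟨k, by omega, hk2, hk3, hk4⟩
    exact this M m hm (by omega)

  -- setup
  set μ : Measure (Fin N → ℝ) := Measure.pi fun _ : Fin N => ν with hμdef
  set f : (Fin N → ℝ) → ℝ := fun ω => ⨆ i : Fin N, ω i with hfdef
  haveI hne : Nonempty (Fin N) := ⟨⟨0, by omega⟩⟩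
  have heval : ∀ i : Fin N, Measurable fun ω : Fin N → ℝ => ω i := fun i => measurable_pi_apply i
  have hfmeas : Measurable f := Measurable.iSup fun i => measurable_pi_apply i
  have hcoord_le : ∀ (ω : Fin N → ℝ) (i : Fin N), ω i ≤ f ω := fun ω i =>
    le_ciSup (Set.Finite.bddAbove (Set.finite_range ω)) i
  have hfmax : ∀ ω : Fin N → ℝ, ∃ i, (∀ j, ω j ≤ ω i) ∧ f ω = ω i := by
    intro ω
    obtain ⟨i, hi⟩ := Finite.exists_max ω
    exact ⟨i, hi, le_antisymm (ciSup_le hi) (hcoord_le ω i)⟩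
  have hevalInt : ∀ i : Fin N, Integrable (fun ω : Fin N → ℝ => |ω i|) μ := by
    intro i
    have h := pi_integrable_prod ν (fun j : Fin N => if j = i then (fun x : ℝ => |x|) else fun _ => (1:ℝ))
      (fun j => by
        by_cases hji : j = i
        · simpa [hji] using hint.abs
        · simp only [hji, if_false]; exact integrable_const 1)
    have heq : (fun ω : Fin N → ℝ =>
        ∏ j, (if j = i then (fun x : ℝ => |x|) else fun _ => (1:ℝ)) (ω j)) = fun ω => |ω i| := by
      funext ω
      rw [Finset.prod_eq_single i]
      · simp
      · intro j _ hj; simp [hj]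
      · simp
    rwa [heq] at h
  have hfInt : Integrable f μ := by
    refine Integrable.mono' (integrable_finset_sum Finset.univ (fun j _ => hevalInt j))
      hfmeas.aestronglyMeasurable ?_
    refine Filter.Eventually.of_forall fun ω => ?_
    obtain ⟨i, hi, hfi⟩ := hfmax ω
    rw [Real.norm_eq_abs, hfi]
    exact Finset.single_le_sum (f := fun j => |ω j|) (fun j _ => abs_nonneg _) (Finset.mem_univ i)
  have haeG : ∀ᵐ ω ∂μ, ∀ i, a M ≤ ω i ∧ ω i < a 0 ∧ 0 ≤ ω i := by
    rw [MeasureTheory.ae_all_iff]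
    intro i
    have hc : {x : ℝ | 0 ≤ x}ᶜ = {x : ℝ | x < 0} := by ext x; simp [not_le]
    have hbad : ν ((Set.Ico (a M) (a 0) ∩ {x : ℝ | 0 ≤ x})ᶜ) = 0 := by
      rw [Set.compl_inter]
      refine le_antisymm (le_trans (measure_union_le _ _) ?_) (zero_le)
      rw [hout, hc, hnonneg]
      simp
    have hnull := Measure.pi_eval_preimage_null (μ := fun _ : Fin N => ν) (i := i) hbad
    rw [← hμdef] at hnull
    rw [MeasureTheory.ae_iff]
    convert hnull using 2
    ext ω
    simp only [Set.mem_setOf_eq, Set.mem_preimage, Set.mem_compl_iff, Set.mem_inter_iff,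
      Set.mem_Ico, Function.eval]
    tauto
  have hf0 : 0 ≤ᵐ[μ] f := by
    refine haeG.mono fun ω hω => ?_
    exact le_trans (hω hne.some).2.2 (hcoord_le ω hne.some)
  have hDpi : ∀ t : ℝ, {ω : Fin N → ℝ | ∀ i, ω i < t}
      = Set.pi Set.univ (fun _ : Fin N => Set.Iio t) := by
    intro t; ext ω; simp [Set.mem_pi]
  have hDmeas : ∀ t : ℝ, MeasurableSet {ω : Fin N → ℝ | ∀ i, ω i < t} := fun t => by
    rw [hDpi]; exact MeasurableSet.univ_pi fun _ => measurableSet_Iio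
  have hDμ : ∀ t : ℝ, μ {ω : Fin N → ℝ | ∀ i, ω i < t} = ν (Set.Iio t) ^ N := by
    intro t
    rw [hDpi, hμdef, Measure.pi_pi]
    simp [Finset.prod_const, Finset.card_univ]
  have hDf : ∀ t : ℝ, {ω : Fin N → ℝ | ∀ i, ω i < t} = {ω | f ω < t} := by
    intro t; ext ω
    simp only [Set.mem_setOf_eq]
    constructor
    · intro h
      obtain ⟨i, _, hfi⟩ := hfmax ω
      rw [hfi]; exact h i
    · intro h i; exact lt_of_le_of_lt (hcoord_le ω i) h

  -- product integral identities
  have hK : ∀ (i : Fin N) (m : ℕ) (Bs : Set ℝ), MeasurableSet Bs →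
      ∫ ω, ∏ j, (if j = i then (Set.Ico (a m) (a (m-1))).indicator id
          else Bs.indicator fun _ => (1:ℝ)) (ω j) ∂μ
        = (∫ x in Set.Ico (a m) (a (m-1)), x ∂ν) * ((ν Bs).toReal)^(N-1) := by
    intro i m Bs hBs
    rw [hμdef, pi_integral_prod]
    rw [← Finset.mul_prod_erase Finset.univ
      (fun j => ∫ x, (if j = i then (Set.Ico (a m) (a (m-1))).indicator id
        else Bs.indicator fun _ => (1:ℝ)) x ∂ν) (Finset.mem_univ i)]
    congr 1
    · simp only [eq_self_iff_true, if_true]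
      rw [integral_indicator measurableSet_Ico]
      simp [id_eq]
    · have h2 : ∀ j ∈ Finset.univ.erase i,
          (∫ x, (if j = i then (Set.Ico (a m) (a (m-1))).indicator id
            else Bs.indicator fun _ => (1:ℝ)) x ∂ν) = (ν Bs).toReal := by
        intro j hj
        rw [if_neg (Finset.ne_of_mem_erase hj), integral_indicator_const (1:ℝ) hBs]
        simp; rfl
      rw [Finset.prod_congr rfl h2, Finset.prod_const,
        Finset.card_erase_of_mem (Finset.mem_univ i), Finset.card_univ, Fintype.card_fin]
  have hKint : ∀ (i : Fin N) (m : ℕ) (Bs : Set ℝ), MeasurableSet Bs →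
      Integrable (fun ω : Fin N → ℝ => ∏ j, (if j = i then (Set.Ico (a m) (a (m-1))).indicator id
          else Bs.indicator fun _ => (1:ℝ)) (ω j)) μ := by
    intro i m Bs hBs
    rw [hμdef]
    refine pi_integrable_prod ν _ fun j => ?_
    by_cases hji : j = i
    · simp only [hji, if_pos rfl]
      exact hint.indicator measurableSet_Ico
    · simp only [hji, if_false]
      exact (integrable_const (1:ℝ)).indicator hBs

  set K : ℕ := M - N + 1 with hKdef
  have hKM : K ≤ M := by omega
  set A : Fin N → ℕ → Set (Fin N → ℝ) := fun i m =>
    {ω | ω i ∈ Set.Ico (a m) (a (m-1)) ∧ ∀ j, j ≠ i → ω j ∈ Set.Ico (a M) (a m)} with hAdef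
  have hAmeas : ∀ (i : Fin N) (m : ℕ), MeasurableSet (A i m) := by
    intro i m
    have heq : A i m = ((fun ω : Fin N → ℝ => ω i) ⁻¹' Set.Ico (a m) (a (m-1))) ∩
        (⋂ j, ⋂ (_ : j ≠ i), (fun ω : Fin N → ℝ => ω j) ⁻¹' Set.Ico (a M) (a m)) := by
      ext ω
      simp [hAdef, Set.mem_iInter]
    rw [heq]
    exact ((heval i) measurableSet_Ico).inter
      (MeasurableSet.iInter fun j => MeasurableSet.iInter fun _ => (heval j) measurableSet_Ico)
  have hCν : ∀ m, m ≤ M → (ν (Set.Ico (a M) (a m))).toReal = ((M - m : ℕ):ℝ)/M := by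
    intro m hm
    have h1 : M - (M - m) = m := by omega
    have h2 := hup2 (M - m) (by omega)
    rw [h1] at h2
    rw [h2, ENNReal.toReal_div, ENNReal.toReal_natCast, ENNReal.toReal_natCast]
  have hprod_eqA : ∀ (i : Fin N) (m : ℕ), 1 ≤ m → m ≤ M →
      (A i m).indicator f
        = fun ω => ∏ j, (if j = i then (Set.Ico (a m) (a (m-1))).indicator id
            else (Set.Ico (a M) (a m)).indicator fun _ => (1:ℝ)) (ω j) := by
    intro i m h1 hmM
    funext ω
    by_cases hω : ω ∈ A i m
    · rw [Set.indicator_of_mem hω]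
      obtain ⟨hi, hj⟩ := hω
      have hfω : f ω = ω i := by
        refine le_antisymm (ciSup_le fun j => ?_) (hcoord_le ω i)
        by_cases hji : j = i
        · rw [hji]
        · exact le_trans (le_of_lt (lt_of_lt_of_le (hj j hji).2 hi.1)) le_rfl
      rw [hfω, ← Finset.mul_prod_erase Finset.univ _ (Finset.mem_univ i)]
      simp only [eq_self_iff_true, if_true]
      rw [Set.indicator_of_mem hi]
      have hrest : ∀ j ∈ Finset.univ.erase i,
          (if j = i then (Set.Ico (a m) (a (m-1))).indicator id
            else (Set.Ico (a M) (a m)).indicator fun _ => (1:ℝ)) (ω j) = 1 := by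
        intro j hj'
        rw [if_neg (Finset.ne_of_mem_erase hj'),
          Set.indicator_of_mem (hj j (Finset.ne_of_mem_erase hj'))]
      rw [Finset.prod_congr rfl hrest, Finset.prod_const_one, mul_one, id_eq]
    · rw [Set.indicator_of_notMem hω]
      rw [hAdef] at hω
      simp only [Set.mem_setOf_eq, not_and] at hω
      by_cases hi : ω i ∈ Set.Ico (a m) (a (m-1))
      · have := hω hi
        push_neg at this
        obtain ⟨j, hji, hjmem⟩ := this
        symm
        apply Finset.prod_eq_zero (Finset.mem_univ j)
        rw [if_neg hji, Set.indicator_of_notMem hjmem]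
      · symm
        apply Finset.prod_eq_zero (Finset.mem_univ i)
        simp only [eq_self_iff_true, if_true]
        rw [Set.indicator_of_notMem hi]
  have hAint : ∀ (i : Fin N) (m : ℕ), 1 ≤ m → m ≤ M →
      ∫ ω in A i m, f ω ∂μ
        = (∫ x in Set.Ico (a m) (a (m-1)), x ∂ν) * (((M-m:ℕ):ℝ)/M)^(N-1) := by
    intro i m h1 h2
    rw [← integral_indicator (hAmeas i m), hprod_eqA i m h1 h2,
      hK i m _ measurableSet_Ico, hCν m h2]
  have hAsub : ∀ (i : Fin N) (m : ℕ), 1 ≤ m → m ≤ M →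
      A i m ⊆ {ω : Fin N → ℝ | ∃ i, ∀ j, j ≠ i → slot (ω i) < slot (ω j)} := by
    intro i m h1 h2 ω hω
    obtain ⟨hi, hj⟩ := hω
    refine ⟨i, fun j hji => ?_⟩
    have hsi : slot (ω i) = m := (hslot m (Finset.mem_Icc.mpr ⟨h1, h2⟩) (ω i)).mpr hi
    obtain ⟨k, hk1, hk2, hk3, hk4⟩ := hdecomp m h2 (ω j) (hj j hji).1 (hj j hji).2
    have hsj : slot (ω j) = k :=
      (hslot k (Finset.mem_Icc.mpr ⟨by omega, hk2⟩) (ω j)).mpr ⟨hk3, hk4⟩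
    rw [hsi, hsj]
    exact hk1
  have hAdisjlt : ∀ (m m' : ℕ) (i i' : Fin N), 1 ≤ m → m' ≤ M → m < m' →
      Disjoint (A i m) (A i' m') := by
    intro m m' i i' h1 h2 hlt
    rw [Set.disjoint_left]
    intro ω hω1 hω2
    have hi1 : a m ≤ ω i := hω1.1.1
    by_cases hii : i = i'
    · have : ω i < a (m'-1) := by rw [hii]; exact hω2.1.2
      have hle : a (m'-1) ≤ a m := hmono (m'-1) (by omega) m (by omega)
      linarith
    · have : ω i < a m' := (hω2.2 i hii).2
      have hlt2 : a m' < a m := hstrict m m' hlt h2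
      linarith
  have hTsum : ∑ m ∈ Finset.Ioc 0 K,
      (N:ℝ) * ((∫ x in Set.Ico (a m) (a (m-1)), x ∂ν) * (((M-m:ℕ):ℝ)/M)^(N-1))
      ≤ ∫ ω in {ω : Fin N → ℝ | ∃ i, ∀ j, j ≠ i → slot (ω i) < slot (ω j)}, f ω ∂μ := by
    have hmem : ∀ m ∈ Finset.Ioc 0 K, 1 ≤ m ∧ m ≤ M := by
      intro m hm
      rw [Finset.mem_Ioc] at hm
      omega
    have step1 : ∀ m ∈ Finset.Ioc 0 K,
        (N:ℝ) * ((∫ x in Set.Ico (a m) (a (m-1)), x ∂ν) * (((M-m:ℕ):ℝ)/M)^(N-1))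
          = ∑ i : Fin N, ∫ ω in A i m, f ω ∂μ := by
      intro m hm
      obtain ⟨h1, h2⟩ := hmem m hm
      rw [Finset.sum_congr rfl fun i _ => hAint i m h1 h2, Finset.sum_const,
        Finset.card_univ, Fintype.card_fin, nsmul_eq_mul]
    rw [Finset.sum_congr rfl step1, ← Finset.sum_product']
    have hdisj : Set.Pairwise ↑(Finset.Ioc 0 K ×ˢ (Finset.univ : Finset (Fin N)))
        (Function.onFun Disjoint (fun p : ℕ × Fin N => A p.2 p.1)) := by
      intro p hp q hq hpq
      simp only [Function.onFun]
      simp only [Finset.coe_product, Set.mem_prod, Finset.mem_coe, Finset.mem_Ioc] at hp hq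
      rcases lt_trichotomy p.1 q.1 with h | h | h
      · exact hAdisjlt p.1 q.1 p.2 q.2 (by omega) (by omega) h
      · have hii : p.2 ≠ q.2 := by
          intro hc
          exact hpq (Prod.ext h hc)
        rw [Set.disjoint_left]
        intro ω hω1 hω2
        have hq2 : ω p.2 ∈ Set.Ico (a M) (a q.1) := hω2.2 p.2 (fun hc => hii ((congrArg _ rfl).trans hc.symm ▸ rfl))
        have hp2 : a p.1 ≤ ω p.2 := hω1.1.1
        rw [← h] at hq2
        exact absurd hq2.2 (not_lt.mpr hp2)
      · exact (hAdisjlt q.1 p.1 q.2 p.2 (by omega) (by omega) h).symm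
    have hunion := integral_biUnion_finset (μ := μ) (f := f)
      (Finset.Ioc 0 K ×ˢ (Finset.univ : Finset (Fin N)))
      (fun p _ => hAmeas p.2 p.1) hdisj (fun p _ => hfInt.integrableOn)
    have hsub : (⋃ p ∈ Finset.Ioc 0 K ×ˢ (Finset.univ : Finset (Fin N)), A p.2 p.1)
        ⊆ {ω : Fin N → ℝ | ∃ i, ∀ j, j ≠ i → slot (ω i) < slot (ω j)} := by
      intro ω hω
      simp only [Set.mem_iUnion, Finset.mem_product, Finset.mem_Ioc] at hω
      obtain ⟨p, ⟨hp1, _⟩, hp3⟩ := hω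
      exact hAsub p.2 p.1 (by omega) (by omega) hp3
    calc ∑ p ∈ Finset.Ioc 0 K ×ˢ (Finset.univ : Finset (Fin N)), ∫ ω in A p.2 p.1, f ω ∂μ
        = ∫ ω in ⋃ p ∈ Finset.Ioc 0 K ×ˢ (Finset.univ : Finset (Fin N)), A p.2 p.1, f ω ∂μ :=
          hunion.symm
      _ ≤ _ := setIntegral_mono_set hfInt.integrableOn (ae_restrict_of_ae hf0)
          (HasSubset.Subset.eventuallyLE hsub)

  classical
  set B : ℕ → Set (Fin N → ℝ) :=
    fun m => {ω | ∀ i, ω i < a (m-1)} \ {ω | ∀ i, ω i < a m} with hBdef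
  have hBmeas : ∀ m, MeasurableSet (B m) := fun m => (hDmeas _).diff (hDmeas _)
  have hBdisj : ∀ m m', m' ≤ M → m < m' → Disjoint (B m) (B m') := by
    intro m m' h2 hlt
    rw [Set.disjoint_left]
    intro ω h1ω h2ω
    apply h1ω.2
    intro i
    exact lt_of_lt_of_le (h2ω.1 i) (hmono (m'-1) (by omega) m (by omega))
  have hW : ∫ ω, f ω ∂μ = ∑ m ∈ Finset.Ioc 0 M, ∫ ω in B m, f ω ∂μ := by
    have hUmeas : MeasurableSet (⋃ m ∈ Finset.Ioc 0 M, B m) :=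
      (Finset.Ioc 0 M).measurableSet_biUnion fun m _ => hBmeas m
    have haeU : ∀ᵐ ω ∂μ, ω ∈ ⋃ m ∈ Finset.Ioc 0 M, B m := by
      refine haeG.mono fun ω hω => ?_
      obtain ⟨m₀, hm1, hm2, hm3, hm4⟩ := exists_min_fail (fun m => ∀ i : Fin N, ω i < a m)
        (fun i => (hω i).2.1) M (fun h => absurd (h hne.some) (not_lt.mpr (hω hne.some).1))
      simp only [Set.mem_iUnion]
      exact ⟨m₀, Finset.mem_Ioc.mpr ⟨hm1, hm2⟩, ⟨hm3, hm4⟩⟩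
    have hcompl : μ (⋃ m ∈ Finset.Ioc 0 M, B m)ᶜ = 0 := by
      have := (MeasureTheory.ae_iff).mp haeU
      simpa [Set.compl_def] using this
    have h1 := integral_add_compl hUmeas hfInt (f := f)
    have h2 : ∫ ω in (⋃ m ∈ Finset.Ioc 0 M, B m)ᶜ, f ω ∂μ = 0 := by
      rw [Measure.restrict_eq_zero.mpr hcompl]
      exact integral_zero_measure f
    have hpair : Set.Pairwise ↑(Finset.Ioc 0 M) (Function.onFun Disjoint B) := by
      intro m hm m' hm' hne'
      simp only [Function.onFun]
      simp only [Finset.coe_Ioc, Set.mem_Ioc] at hm hm'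
      rcases lt_or_gt_of_ne hne' with h | h
      · exact hBdisj m m' hm'.2 h
      · exact (hBdisj m' m hm.2 h).symm
    have h3 := integral_biUnion_finset (μ := μ) (f := f) (Finset.Ioc 0 M)
      (fun m _ => hBmeas m) hpair (fun m _ => hfInt.integrableOn)
    rw [← h3, ← h1, h2, add_zero]
  have hIioval : ∀ m, 1 ≤ m → m ≤ M →
      (ν (Set.Iio (a (m-1)))).toReal = ((M-(m-1):ℕ):ℝ)/M := by
    intro m h1 h2
    rw [hIio (m-1) (by omega), ENNReal.toReal_div, ENNReal.toReal_natCast, ENNReal.toReal_natCast]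
  have hEm_good : ∀ m, 1 ≤ m → m ≤ M →
      ∫ ω in B m, f ω ∂μ ≤ (N:ℝ) *
        ((∫ x in Set.Ico (a m) (a (m-1)), x ∂ν) * (((M-(m-1):ℕ):ℝ)/M)^(N-1)) := by
    intro m h1 h2
    set g : Fin N → (Fin N → ℝ) → ℝ := fun i ω => ∏ j,
      (if j = i then (Set.Ico (a m) (a (m-1))).indicator id
        else (Set.Iio (a (m-1))).indicator fun _ => (1:ℝ)) (ω j) with hgdef
    have hle : ∀ᵐ ω ∂μ, (B m).indicator f ω ≤ ∑ i, g i ω := by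
      refine haeG.mono fun ω hω => ?_
      have hgnn : ∀ i, 0 ≤ g i ω := by
        intro i
        refine Finset.prod_nonneg fun j _ => ?_
        by_cases hji : j = i
        · rw [if_pos hji]
          by_cases hmem : ω j ∈ Set.Ico (a m) (a (m-1))
          · rw [Set.indicator_of_mem hmem]
            exact (hω j).2.2
          · rw [Set.indicator_of_notMem hmem]
        · rw [if_neg hji]
          by_cases hmem : ω j ∈ Set.Iio (a (m-1))
          · rw [Set.indicator_of_mem hmem]
            norm_num
          · rw [Set.indicator_of_notMem hmem]
      by_cases hωB : ω ∈ B m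
      · rw [Set.indicator_of_mem hωB]
        obtain ⟨hBm1, hBm2⟩ := hωB
        simp only [Set.mem_setOf_eq, not_forall, not_lt] at hBm2
        obtain ⟨i0, hi0⟩ := hBm2
        obtain ⟨imax, hmax, hfeq⟩ := hfmax ω
        have himax : ω imax ∈ Set.Ico (a m) (a (m-1)) := ⟨le_trans hi0 (hmax i0), hBm1 imax⟩
        have hgi : g imax ω = ω imax := by
          rw [hgdef]
          simp only
          rw [← Finset.mul_prod_erase Finset.univ _ (Finset.mem_univ imax)]
          simp only [eq_self_iff_true, if_true]
          rw [Set.indicator_of_mem himax]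
          have hrest : ∀ j ∈ Finset.univ.erase imax,
              (if j = imax then (Set.Ico (a m) (a (m-1))).indicator id
                else (Set.Iio (a (m-1))).indicator fun _ => (1:ℝ)) (ω j) = 1 := by
            intro j hj'
            rw [if_neg (Finset.ne_of_mem_erase hj'),
              Set.indicator_of_mem (show ω j ∈ Set.Iio (a (m-1)) from hBm1 j)]
          rw [Finset.prod_congr rfl hrest, Finset.prod_const_one, mul_one, id_eq]
        rw [hfeq, ← hgi]
        exact Finset.single_le_sum (fun i _ => hgnn i) (Finset.mem_univ imax)
      · rw [Set.indicator_of_notMem hωB]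
        exact Finset.sum_nonneg fun i _ => hgnn i
    have hInt2 : Integrable (fun ω => ∑ i, g i ω) μ :=
      integrable_finset_sum _ (fun i _ => hKint i m _ measurableSet_Iio)
    have hmono' := integral_mono_ae (hfInt.indicator (hBmeas m)) hInt2 hle
    rw [integral_indicator (hBmeas m)] at hmono'
    calc ∫ ω in B m, f ω ∂μ ≤ ∫ ω, ∑ i, g i ω ∂μ := hmono'
      _ = ∑ i, ∫ ω, g i ω ∂μ :=
          integral_finset_sum _ (fun i _ => hKint i m _ measurableSet_Iio)
      _ = ∑ _i : Fin N, (∫ x in Set.Ico (a m) (a (m-1)), x ∂ν)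
            * ((ν (Set.Iio (a (m-1)))).toReal)^(N-1) :=
          Finset.sum_congr rfl fun i _ => hK i m _ measurableSet_Iio
      _ = (N:ℝ) * ((∫ x in Set.Ico (a m) (a (m-1)), x ∂ν) * (((M-(m-1):ℕ):ℝ)/M)^(N-1)) := by
          rw [Finset.sum_const, Finset.card_univ, Fintype.card_fin, nsmul_eq_mul,
            hIioval m h1 h2]
  have hEm_bad : ∀ m, 1 ≤ m → m ≤ M → ∫ ω in B m, f ω ∂μ ≤
      (((M-(m-1):ℕ):ℝ)/M)^N * ∫ ω, f ω ∂μ := by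
    intro m h1 h2
    have hsub : B m ⊆ {ω | f ω < a (m-1)} := by
      intro ω hω
      rw [← hDf]
      exact hω.1
    calc ∫ ω in B m, f ω ∂μ ≤ ∫ ω in {ω | f ω < a (m-1)}, f ω ∂μ :=
        setIntegral_mono_set hfInt.integrableOn (ae_restrict_of_ae hf0)
          (HasSubset.Subset.eventuallyLE hsub)
      _ ≤ (μ {ω | f ω < a (m-1)}).toReal * ∫ ω, f ω ∂μ := cheb μ f hfmeas hfInt
      _ = (((M-(m-1):ℕ):ℝ)/M)^N * ∫ ω, f ω ∂μ := by
          rw [← hDf, hDμ, hIio (m-1) (by omega)]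
          congr 1
          rw [ENNReal.toReal_pow, ENNReal.toReal_div, ENNReal.toReal_natCast, ENNReal.toReal_natCast]
  -- assembly
  have hNc : (0:ℝ) < (N:ℝ) - 1 := by
    have : (2:ℝ) ≤ (N:ℝ) := by exact_mod_cast hN
    linarith
  have hCc : (0:ℝ) < (1 + 1/((N:ℝ)-1))^(N-1) := by positivity
  have hW0 : 0 ≤ ∫ ω, f ω ∂μ := integral_nonneg_of_ae hf0
  have hgoodsum : ∑ m ∈ Finset.Ioc 0 K, ∫ ω in B m, f ω ∂μ
      ≤ (1 + 1/((N:ℝ)-1))^(N-1)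
        * ∫ ω in {ω : Fin N → ℝ | ∃ i, ∀ j, j ≠ i → slot (ω i) < slot (ω j)}, f ω ∂μ := by
    have hgoodK : ∀ m ∈ Finset.Ioc 0 K, ∫ ω in B m, f ω ∂μ ≤
        (1 + 1/((N:ℝ)-1))^(N-1) *
          ((N:ℝ) * ((∫ x in Set.Ico (a m) (a (m-1)), x ∂ν) * (((M-m:ℕ):ℝ)/M)^(N-1))) := by
      intro m hm
      rw [Finset.mem_Ioc] at hm
      have h1 : 1 ≤ m := hm.1
      have h2 : m ≤ M := by omega
      refine le_trans (hEm_good m h1 h2) ?_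
      have hJ : 0 ≤ ∫ x in Set.Ico (a m) (a (m-1)), x ∂ν :=
        setIntegral_nonneg measurableSet_Ico
          (fun x hx => le_trans (hapos m (by omega)).le hx.1)
      have hr := ratio_aux (N-1) (M-m) (by omega) (by omega) (M:ℝ) hMr
      have hc2 : ((N-1:ℕ):ℝ) = (N:ℝ) - 1 := by
        rw [Nat.cast_sub (by omega : 1 ≤ N), Nat.cast_one]
      rw [hc2] at hr
      have hc1 : (M-(m-1):ℕ) = (M-m) + 1 := by omega
      calc (N:ℝ) * ((∫ x in Set.Ico (a m) (a (m-1)), x ∂ν) * (((M-(m-1):ℕ):ℝ)/M)^(N-1))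
          ≤ (N:ℝ) * ((∫ x in Set.Ico (a m) (a (m-1)), x ∂ν)
              * ((1 + 1/((N:ℝ)-1))^(N-1) * (((M-m:ℕ):ℝ)/M)^(N-1))) := by
            refine mul_le_mul_of_nonneg_left (mul_le_mul_of_nonneg_left ?_ hJ) (by positivity)
            have heq : (((M-(m-1):ℕ):ℝ)/(M:ℝ)) = (((M-m:ℕ):ℝ)+1)/(M:ℝ) := by
              rw [hc1]; push_cast; ring
            rw [heq]
            exact hr
        _ = (1 + 1/((N:ℝ)-1))^(N-1) *
            ((N:ℝ) * ((∫ x in Set.Ico (a m) (a (m-1)), x ∂ν) * (((M-m:ℕ):ℝ)/M)^(N-1))) := by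
            ring
    calc ∑ m ∈ Finset.Ioc 0 K, ∫ ω in B m, f ω ∂μ
        ≤ ∑ m ∈ Finset.Ioc 0 K, (1 + 1/((N:ℝ)-1))^(N-1) *
            ((N:ℝ) * ((∫ x in Set.Ico (a m) (a (m-1)), x ∂ν) * (((M-m:ℕ):ℝ)/M)^(N-1))) :=
          Finset.sum_le_sum hgoodK
      _ = (1 + 1/((N:ℝ)-1))^(N-1) * ∑ m ∈ Finset.Ioc 0 K,
            (N:ℝ) * ((∫ x in Set.Ico (a m) (a (m-1)), x ∂ν) * (((M-m:ℕ):ℝ)/M)^(N-1)) := by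
          rw [Finset.mul_sum]
      _ ≤ _ := mul_le_mul_of_nonneg_left hTsum hCc.le
  have hbadsum : ∑ m ∈ Finset.Ioc K M, ∫ ω in B m, f ω ∂μ
      ≤ ((N:ℝ)/M)^N * ∫ ω, f ω ∂μ := by
    calc ∑ m ∈ Finset.Ioc K M, ∫ ω in B m, f ω ∂μ
        ≤ ∑ m ∈ Finset.Ioc K M, (((M-(m-1):ℕ):ℝ)/M)^N * ∫ ω, f ω ∂μ := by
          refine Finset.sum_le_sum fun m hm => ?_
          rw [Finset.mem_Ioc] at hm
          exact hEm_bad m (by omega) hm.2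
      _ = (∑ m ∈ Finset.Ioc K M, (((M-(m-1):ℕ):ℝ)/M)^N) * ∫ ω, f ω ∂μ :=
          (Finset.sum_mul _ _ _).symm
      _ ≤ ((N:ℝ)/M)^N * ∫ ω, f ω ∂μ := by
          refine mul_le_mul_of_nonneg_right ?_ hW0
          have hre : ∑ m ∈ Finset.Ioc K M, (((M-(m-1):ℕ):ℝ)/M)^N
              = ∑ m' ∈ Finset.Ico 1 N, ((m':ℝ)/M)^N := by
            refine Finset.sum_nbij' (i := fun m => M - (m-1)) (j := fun m' => M - (m'-1))
              ?_ ?_ ?_ ?_ ?_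
            · intro m hm
              rw [Finset.mem_Ioc] at hm
              rw [Finset.mem_Ico]
              omega
            · intro m' hm'
              rw [Finset.mem_Ico] at hm'
              rw [Finset.mem_Ioc]
              omega
            · intro m hm
              rw [Finset.mem_Ioc] at hm
              omega
            · intro m' hm'
              rw [Finset.mem_Ico] at hm'
              omega
            · intro m hm
              rfl
          rw [hre]
          exact sum_pow_le N hN M hMr
  have hsplitsum := Finset.sum_Ioc_consecutive (fun m => ∫ ω in B m, f ω ∂μ)
    (Nat.zero_le K) hKM
  have hfinal : (1 - ((N:ℝ)/M)^N) * (∫ ω, f ω ∂μ)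
      ≤ (1 + 1/((N:ℝ)-1))^(N-1)
        * ∫ ω in {ω : Fin N → ℝ | ∃ i, ∀ j, j ≠ i → slot (ω i) < slot (ω j)}, f ω ∂μ := by
    have hWsum : ∫ ω, f ω ∂μ
        = (∑ m ∈ Finset.Ioc 0 K, ∫ ω in B m, f ω ∂μ)
          + ∑ m ∈ Finset.Ioc K M, ∫ ω in B m, f ω ∂μ := by
      rw [hW, ← hsplitsum]
    nlinarith [hgoodsum, hbadsum, hWsum]
  rw [div_mul_eq_mul_div, div_le_iff₀ hCc]
  nlinarith [hfinal]
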